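/- Let (μ_t) = (1/n) Σ_{i=1}^n δ_{x_i(t)} where each x_i : I → ℝ^d is continuously differentiable. Then the metric derivative of (μ_t) with respect to the sliced Wasserstein distance satisfies |μ'|_{SW}(t)² = (1/d) |μ'|_{W}(t)², where |μ'|_{W}(t)² = (1/n) Σ_{i=1}^n |x_i'(t)|², provided the particles remain distinct so that |μ'|_W(t)² = (1/n)Σ|x_i'(t)|². -/

import Mathlib

open MeasureTheory Metric Filter Topology
open scoped ENNReal RealInnerProductSpace Pointwise

noncomputable section

abbrev Euc (d : ℕ) := EuclideanSpace ℝ (Fin d)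

/-- The normalized uniform (rotation-invariant) probability measure on the unit sphere. -/
def uniformSphere (d : ℕ) : Measure (sphere (0 : Euc d) 1) :=
  (((volume : Measure (Euc d)).toSphere) Set.univ)⁻¹ • (volume : Measure (Euc d)).toSphere

/-- Couplings (transport plans) between two measures. -/
def Coupling {X : Type*} [MeasurableSpace X] (μ ν : Measure X) : Set (Measure (X × X)) :=
  {γ | γ.map Prod.fst = μ ∧ γ.map Prod.snd = ν}

/-- Squared 2-Wasserstein distance. -/
def W2sq {X : Type*} [MeasurableSpace X] [Dist X] (μ ν : Measure X) : ℝ≥0∞ :=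
  ⨅ (γ : Measure (X × X)) (_ : γ ∈ Coupling μ ν),
    ∫⁻ p, ENNReal.ofReal (dist p.1 p.2 ^ 2) ∂γ

/-- 2-Wasserstein distance. -/
def W2 {X : Type*} [MeasurableSpace X] [Dist X] (μ ν : Measure X) : ℝ≥0∞ :=
  (W2sq μ ν) ^ (1/2 : ℝ)

/-- Projection (pushforward) of a measure on ℝ^d onto the direction θ. -/
def projMeas (d : ℕ) (μ : Measure (Euc d)) (θ : sphere (0 : Euc d) 1) : Measure ℝ :=
  μ.map (fun x => ⟪x, (θ : Euc d)⟫)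

/-- Squared sliced 2-Wasserstein distance: sphere average of squared Wasserstein distances of
projections. -/
def SW2sq (d : ℕ) (μ ν : Measure (Euc d)) : ℝ≥0∞ :=
  ∫⁻ θ, W2sq (projMeas d μ θ) (projMeas d ν θ) ∂(uniformSphere d)

/-- Sliced 2-Wasserstein distance. -/
def SW2 (d : ℕ) (μ ν : Measure (Euc d)) : ℝ≥0∞ :=
  (SW2sq d μ ν) ^ (1/2 : ℝ)

/-- Finite second moment. -/
def FiniteSecondMoment {X : Type*} [MeasurableSpace X] [Norm X] (μ : Measure X) : Prop :=
  ∫⁻ x, ENNReal.ofReal (‖x‖ ^ 2) ∂μ < ⊤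

/-- Narrow (weak) convergence of a sequence of measures. -/
def NarrowTendsto {X : Type*} [MeasurableSpace X] [TopologicalSpace X]
    (μs : ℕ → Measure X) (μ : Measure X) : Prop :=
  ∀ f : BoundedContinuousFunction X ℝ,
    Tendsto (fun k => ∫ x, f x ∂(μs k)) atTop (𝓝 (∫ x, f x ∂μ))

end

/-- Real-valued sliced Wasserstein distance. -/
noncomputable def SW2r (d : ℕ) (μ ν : Measure (Euc d)) : ℝ := (SW2 d μ ν).toReal

section AuxDiscrete


lemma map_finset_sum' {α β ι : Type*} [MeasurableSpace α] [MeasurableSpace β]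
    {f : α → β} (hf : Measurable f) (s : Finset ι) (μ : ι → MeasureTheory.Measure α) :
    MeasureTheory.Measure.map f (∑ i ∈ s, μ i) = ∑ i ∈ s, MeasureTheory.Measure.map f (μ i) := by
  classical
  induction s using Finset.induction_on with
  | empty => simp
  | insert _ _ h ih =>
      rw [Finset.sum_insert h, Finset.sum_insert h, MeasureTheory.Measure.map_add _ _ hf, ih]

lemma map_discrete {α β : Type*} [MeasurableSpace α] [MeasurableSpace β]
    {f : α → β} (hf : Measurable f) (c : ℝ≥0∞) {n : ℕ} (x : Fin n → α) :
    MeasureTheory.Measure.map f (c • ∑ i : Fin n, MeasureTheory.Measure.dirac (x i))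
      = c • ∑ i : Fin n, MeasureTheory.Measure.dirac (f (x i)) := by
  rw [MeasureTheory.Measure.map_smul, map_finset_sum' hf]
  congr 1
  refine Finset.sum_congr rfl fun i _ => ?_
  exact MeasureTheory.Measure.map_dirac' hf (x i)

lemma lintegral_discrete' {α : Type*} [MeasurableSpace α] [MeasurableSingletonClass α]
    (c : ℝ≥0∞) {n : ℕ} (x : Fin n → α) (g : α → ℝ≥0∞) :
    ∫⁻ a, g a ∂(c • ∑ i : Fin n, MeasureTheory.Measure.dirac (x i)) = c * ∑ i : Fin n, g (x i) := by
  rw [MeasureTheory.lintegral_smul_measure, MeasureTheory.lintegral_finset_sum_measure]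
  simp [MeasureTheory.lintegral_dirac]

lemma discrete_apply_zero {α : Type*} [MeasurableSpace α] (c : ℝ≥0∞) {n : ℕ} (x : Fin n → α)
    {A : Set α} (hA : MeasurableSet A) (hx : ∀ i, x i ∈ A) :
    (c • ∑ i : Fin n, MeasureTheory.Measure.dirac (x i)) Aᶜ = 0 := by
  rw [MeasureTheory.Measure.smul_apply, MeasureTheory.Measure.finset_sum_apply]
  have : ∀ i : Fin n, MeasureTheory.Measure.dirac (x i) Aᶜ = 0 := by
    intro i
    rw [MeasureTheory.Measure.dirac_apply' _ hA.compl]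
    simp [Set.indicator_of_notMem, hx i]
  simp [this]

lemma W2sq_discrete_le {n : ℕ} (a b : Fin n → ℝ) :
    W2sq ((n : ℝ≥0∞)⁻¹ • ∑ i : Fin n, MeasureTheory.Measure.dirac (a i))
        ((n : ℝ≥0∞)⁻¹ • ∑ i : Fin n, MeasureTheory.Measure.dirac (b i))
      ≤ (n : ℝ≥0∞)⁻¹ * ∑ i : Fin n, ENNReal.ofReal ((a i - b i) ^ 2) := by
  set γ : MeasureTheory.Measure (ℝ × ℝ) :=
    (n : ℝ≥0∞)⁻¹ • ∑ i : Fin n, MeasureTheory.Measure.dirac (a i, b i) with hγdef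
  have hγ : γ ∈ Coupling ((n : ℝ≥0∞)⁻¹ • ∑ i : Fin n, MeasureTheory.Measure.dirac (a i))
      ((n : ℝ≥0∞)⁻¹ • ∑ i : Fin n, MeasureTheory.Measure.dirac (b i)) := by
    constructor
    · rw [hγdef, map_discrete measurable_fst]
    · rw [hγdef, map_discrete measurable_snd]
  refine le_trans (iInf₂_le γ hγ) (le_of_eq ?_)
  rw [hγdef, lintegral_discrete']
  congr 1
  refine Finset.sum_congr rfl fun i _ => ?_
  rw [Real.dist_eq, sq_abs]

lemma W2sq_discrete_ge {n : ℕ} (a b : Fin n → ℝ)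
    (hC : ∀ i j k : Fin n, j ≠ k → 2 * |a i - b i| ≤ |b j - b k|) :
    (n : ℝ≥0∞)⁻¹ * ∑ i : Fin n, ENNReal.ofReal ((a i - b i) ^ 2)
      ≤ W2sq ((n : ℝ≥0∞)⁻¹ • ∑ i : Fin n, MeasureTheory.Measure.dirac (a i))
        ((n : ℝ≥0∞)⁻¹ • ∑ i : Fin n, MeasureTheory.Measure.dirac (b i)) := by
  classical
  have key : ∀ i j : Fin n, (a j - b j) ^ 2 ≤ (a i - b j) ^ 2 := by
    intro i j
    rcases eq_or_ne i j with rfl | hij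
    · exact le_refl _
    · have h1 : 2 * |a i - b i| ≤ |b i - b j| := hC i i j hij
      have h2 : 2 * |a j - b j| ≤ |b i - b j| := hC j i j hij
      have h3 : |b i - b j| - |b i - a i| ≤ |a i - b j| := by
        have h4 := abs_sub_abs_le_abs_sub (b i - b j) (b i - a i)
        have h5 : (b i - b j) - (b i - a i) = a i - b j := by ring
        rwa [h5] at h4
      have h6 : |a j - b j| ≤ |a i - b j| := by
        have := abs_sub_comm (b i) (a i)
        linarith
      calc (a j - b j) ^ 2 = |a j - b j| ^ 2 := (sq_abs _).symm
        _ ≤ |a i - b j| ^ 2 := by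
            exact pow_le_pow_left₀ (abs_nonneg _) h6 2
        _ = (a i - b j) ^ 2 := sq_abs _
  refine le_iInf fun γ => le_iInf fun hγ => ?_
  obtain ⟨h1, h2⟩ := hγ
  set A : Set ℝ := Set.range a with hA
  set B : Set ℝ := Set.range b with hB
  have hAm : MeasurableSet A := (Set.finite_range a).measurableSet
  have hBm : MeasurableSet B := (Set.finite_range b).measurableSet
  set φ : ℝ → ℝ≥0∞ := fun y =>
    ⨆ j : Fin n, Set.indicator {b j} (fun _ => ENNReal.ofReal ((a j - b j) ^ 2)) y with hφ
  have hφm : Measurable φ :=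
    Measurable.iSup fun j => measurable_const.indicator (measurableSet_singleton _)
  have hae : ∀ᵐ p ∂γ, p.1 ∈ A ∧ p.2 ∈ B := by
    have hA0 : γ {p : ℝ × ℝ | p.1 ∉ A} = 0 := by
      have heq : γ (Prod.fst ⁻¹' Aᶜ)
          = ((n : ℝ≥0∞)⁻¹ • ∑ i : Fin n, MeasureTheory.Measure.dirac (a i)) Aᶜ := by
        rw [← h1, MeasureTheory.Measure.map_apply measurable_fst hAm.compl]
      have h0 := discrete_apply_zero (n : ℝ≥0∞)⁻¹ a hAm (fun i => Set.mem_range_self i)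
      rw [h0] at heq
      exact heq
    have hB0 : γ {p : ℝ × ℝ | p.2 ∉ B} = 0 := by
      have heq : γ (Prod.snd ⁻¹' Bᶜ)
          = ((n : ℝ≥0∞)⁻¹ • ∑ i : Fin n, MeasureTheory.Measure.dirac (b i)) Bᶜ := by
        rw [← h2, MeasureTheory.Measure.map_apply measurable_snd hBm.compl]
      have h0 := discrete_apply_zero (n : ℝ≥0∞)⁻¹ b hBm (fun i => Set.mem_range_self i)
      rw [h0] at heq
      exact heq
    rw [MeasureTheory.ae_iff]
    refine MeasureTheory.measure_mono_null ?_
      (MeasureTheory.measure_union_null hA0 hB0)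
    intro p hp
    simp only [Set.mem_setOf_eq, not_and_or] at hp
    rcases hp with hp | hp
    · exact Or.inl hp
    · exact Or.inr hp
  have hineq : ∀ᵐ p ∂γ, φ p.2 ≤ ENNReal.ofReal (dist p.1 p.2 ^ 2) := by
    filter_upwards [hae] with p hp
    obtain ⟨⟨i, hi⟩, ⟨j0, hj0⟩⟩ := hp
    refine iSup_le fun j => ?_
    by_cases hj : p.2 ∈ ({b j} : Set ℝ)
    · rw [Set.indicator_of_mem hj]
      have hpj : p.2 = b j := hj
      rw [Real.dist_eq, sq_abs, ← hi, hpj]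
      exact ENNReal.ofReal_le_ofReal (key i j)
    · rw [Set.indicator_of_notMem hj]
      exact zero_le
  calc (n : ℝ≥0∞)⁻¹ * ∑ i : Fin n, ENNReal.ofReal ((a i - b i) ^ 2)
      ≤ (n : ℝ≥0∞)⁻¹ * ∑ j : Fin n, φ (b j) := by
        refine mul_le_mul_right (Finset.sum_le_sum fun j _ => ?_) _
        refine le_iSup_of_le j ?_
        rw [Set.indicator_of_mem (Set.mem_singleton _)]
    _ = ∫⁻ y, φ y ∂((n : ℝ≥0∞)⁻¹ • ∑ i : Fin n, MeasureTheory.Measure.dirac (b i)) :=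
        (lintegral_discrete' _ _ _).symm
    _ = ∫⁻ p, φ p.2 ∂γ := by rw [← h2, MeasureTheory.lintegral_map hφm measurable_snd]
    _ ≤ ∫⁻ p, ENNReal.ofReal (dist p.1 p.2 ^ 2) ∂γ := MeasureTheory.lintegral_mono_ae hineq

end AuxDiscrete

section AuxSphere


variable (d : ℕ)

lemma toSphere_univ_eq : (volume : Measure (Euc d)).toSphere Set.univ
    = (d : ℝ≥0∞) * volume (ball (0 : Euc d) 1) := by
  rw [Measure.toSphere_apply_univ]
  congr
  exact finrank_euclideanSpace_fin

lemma toSphere_univ_ne_zero (hd : 0 < d) : (volume : Measure (Euc d)).toSphere Set.univ ≠ 0 := by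
  rw [toSphere_univ_eq]
  exact mul_ne_zero (by exact_mod_cast hd.ne') (measure_ball_pos _ _ one_pos).ne'

lemma toSphere_univ_ne_top : (volume : Measure (Euc d)).toSphere Set.univ ≠ ⊤ :=
  (measure_lt_top _ _).ne

lemma uniformSphere_univ (hd : 0 < d) : uniformSphere d Set.univ = 1 := by
  rw [uniformSphere, Measure.smul_apply, smul_eq_mul,
    ENNReal.inv_mul_cancel (toSphere_univ_ne_zero d hd) (toSphere_univ_ne_top d)]

lemma smul_sphere_set_eq (S : Set (Euc d)) (hS : S ⊆ sphere (0 : Euc d) 1) :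
    Set.Ioo (0:ℝ) 1 • S = {x : Euc d | ‖x‖ ∈ Set.Ioo (0:ℝ) 1 ∧ ‖x‖⁻¹ • x ∈ S} := by
  ext x
  constructor
  · rintro ⟨c, hc, y, hy, rfl⟩
    have hy1 : ‖y‖ = 1 := by
      have := hS hy
      rwa [mem_sphere_zero_iff_norm] at this
    have hc0 : (0:ℝ) < c := hc.1
    have hnorm : ‖c • y‖ = c := by
      rw [norm_smul, hy1, Real.norm_eq_abs, abs_of_pos hc0, mul_one]
    refine ⟨by rw [hnorm]; exact hc, ?_⟩
    rw [hnorm, smul_smul, inv_mul_cancel₀ hc0.ne', one_smul]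
    exact hy
  · rintro ⟨⟨h0, h1⟩, hmem⟩
    exact ⟨‖x‖, ⟨h0, h1⟩, ‖x‖⁻¹ • x, hmem, by
      show ‖x‖ • (‖x‖⁻¹ • x) = x
      rw [smul_smul, mul_inv_cancel₀ h0.ne', one_smul]⟩

lemma coe_sphere_image_subset (S : Set (sphere (0 : Euc d) 1)) :
    Subtype.val '' S ⊆ sphere (0 : Euc d) 1 := by
  rintro x ⟨θ, _, rfl⟩; exact θ.2

lemma coe_sphere_measurable {S : Set (sphere (0 : Euc d) 1)} (hS : MeasurableSet S) :
    MeasurableSet (Subtype.val '' S) :=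
  (MeasurableEmbedding.subtype_coe (isClosed_sphere.measurableSet)).measurableSet_image.2 hS

lemma smul_sphere_set_measurable {S : Set (sphere (0 : Euc d) 1)} (hS : MeasurableSet S) :
    MeasurableSet (Set.Ioo (0:ℝ) 1 • (Subtype.val '' S)) := by
  rw [smul_sphere_set_eq d _ (coe_sphere_image_subset d S)]
  have h1 : Measurable fun x : Euc d => ‖x‖ := measurable_norm
  have h2 : Measurable fun x : Euc d => ‖x‖⁻¹ • x := (measurable_norm.inv).smul measurable_id
  exact (h1 measurableSet_Ioo).inter (h2 (coe_sphere_measurable d hS))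

/-- Map on the sphere induced by a linear isometry equivalence. -/
noncomputable def sphereMap (e : Euc d ≃ₗᵢ[ℝ] Euc d) (θ : sphere (0 : Euc d) 1) : sphere (0 : Euc d) 1 :=
  ⟨e θ.1, by
    have := θ.2
    rw [mem_sphere_zero_iff_norm] at this ⊢
    rw [e.norm_map, this]⟩

lemma sphereMap_continuous (e : Euc d ≃ₗᵢ[ℝ] Euc d) : Continuous (sphereMap d e) :=
  Continuous.subtype_mk (e.continuous.comp continuous_subtype_val) _

lemma toSphere_map_isometry (e : Euc d ≃ₗᵢ[ℝ] Euc d) :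
    Measure.map (sphereMap d e) (volume : Measure (Euc d)).toSphere
      = (volume : Measure (Euc d)).toSphere := by
  ext S hS
  rw [Measure.map_apply (sphereMap_continuous d e).measurable hS,
    Measure.toSphere_apply' _ ((sphereMap_continuous d e).measurable hS),
    Measure.toSphere_apply' _ hS]
  have hset : Set.Ioo (0:ℝ) 1 • (Subtype.val '' (sphereMap d e ⁻¹' S))
      = e ⁻¹' (Set.Ioo (0:ℝ) 1 • (Subtype.val '' S)) := by
    ext x
    constructor
    · rintro ⟨c, hc, y, ⟨θ, hθ, rfl⟩, rfl⟩
      refine ⟨c, hc, (sphereMap d e θ).1, ⟨sphereMap d e θ, hθ, rfl⟩, ?_⟩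
      simp [sphereMap, _root_.map_smul]
    · intro hx
      obtain ⟨c, hc, y, ⟨ψ, hψ, rfl⟩, hxe⟩ := hx
      refine ⟨c, hc, (sphereMap d e.symm ψ).1, ⟨sphereMap d e.symm ψ, ?_, rfl⟩, ?_⟩
      · have : sphereMap d e (sphereMap d e.symm ψ) = ψ := by
          apply Subtype.ext
          simp [sphereMap]
        rw [Set.mem_preimage, this]
        exact hψ
      · have hxe' : c • (ψ : Euc d) = e x := hxe
        have hx2 : x = e.symm (c • (ψ : Euc d)) := by
          rw [hxe']; simp
        rw [hx2]
        show c • (e.symm (ψ : Euc d)) = e.symm (c • (ψ : Euc d))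
        exact (_root_.map_smul e.symm.toLinearEquiv c (ψ : Euc d)).symm
  rw [hset]
  congr 1
  exact e.measurePreserving.measure_preimage
    (smul_sphere_set_measurable d hS).nullMeasurableSet

lemma lintegral_toSphere_comp (e : Euc d ≃ₗᵢ[ℝ] Euc d) (g : sphere (0 : Euc d) 1 → ℝ≥0∞)
    (hg : Measurable g) :
    ∫⁻ θ, g (sphereMap d e θ) ∂(volume : Measure (Euc d)).toSphere
      = ∫⁻ θ, g θ ∂(volume : Measure (Euc d)).toSphere := by
  rw [← lintegral_map hg (sphereMap_continuous d e).measurable, toSphere_map_isometry]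

lemma uniformSphere_hyperplane_null (hd : 0 < d) {w : Euc d} (hw : w ≠ 0) :
    uniformSphere d {θ : sphere (0 : Euc d) 1 | ⟪w, (θ : Euc d)⟫ = 0} = 0 := by
  set S : Set (sphere (0 : Euc d) 1) := {θ | ⟪w, (θ : Euc d)⟫ = 0} with hSdef
  have hSm : MeasurableSet S :=
    (isClosed_eq (continuous_const.inner continuous_subtype_val) continuous_const).measurableSet
  have h1 : (volume : Measure (Euc d)).toSphere S = 0 := by
    rw [Measure.toSphere_apply' _ hSm]
    have hker : LinearMap.ker (innerSL ℝ w : Euc d →ₗ[ℝ] ℝ) ≠ ⊤ := by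
      intro h
      have hwk : w ∈ LinearMap.ker (innerSL ℝ w : Euc d →ₗ[ℝ] ℝ) := h.symm ▸ Submodule.mem_top
      rw [LinearMap.mem_ker] at hwk
      simp only [ContinuousLinearMap.coe_coe, innerSL_apply_apply] at hwk
      exact hw (inner_self_eq_zero.1 hwk)
    have hnull : volume ((LinearMap.ker (innerSL ℝ w : Euc d →ₗ[ℝ] ℝ) : Submodule ℝ (Euc d)) : Set (Euc d)) = 0 :=
      Measure.addHaar_submodule _ _ hker
    have hsub : Set.Ioo (0:ℝ) 1 • (Subtype.val '' S)
        ⊆ ((LinearMap.ker (innerSL ℝ w : Euc d →ₗ[ℝ] ℝ) : Submodule ℝ (Euc d)) : Set (Euc d)) := by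
      rintro x ⟨c, hc, y, ⟨θ, hθ, rfl⟩, rfl⟩
      have hθ0 : ⟪w, (θ : Euc d)⟫ = 0 := hθ
      simp only [SetLike.mem_coe, LinearMap.mem_ker, ContinuousLinearMap.coe_coe, innerSL_apply_apply]
      rw [inner_smul_right, hθ0, mul_zero]
    rw [measure_mono_null hsub hnull, mul_zero]
  rw [uniformSphere, Measure.smul_apply, h1, smul_zero]

end AuxSphere

section AuxQ


variable (d : ℕ)

noncomputable def Qfun (w : Euc d) : ℝ≥0∞ :=
  ∫⁻ θ : sphere (0 : Euc d) 1, ENNReal.ofReal (⟪w, (θ : Euc d)⟫ ^ 2) ∂(uniformSphere d)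

lemma Qfun_meas_integrand (w : Euc d) :
    Measurable fun θ : sphere (0 : Euc d) 1 => ENNReal.ofReal (⟪w, (θ : Euc d)⟫ ^ 2) :=
  (((continuous_const.inner continuous_subtype_val).pow 2).measurable).ennreal_ofReal

lemma Qfun_isometry (e : Euc d ≃ₗᵢ[ℝ] Euc d) (w : Euc d) : Qfun d (e w) = Qfun d w := by
  unfold Qfun uniformSphere
  rw [lintegral_smul_measure, lintegral_smul_measure]
  congr 1
  rw [← lintegral_toSphere_comp d e _ (Qfun_meas_integrand d (e w))]
  refine lintegral_congr fun θ => ?_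
  have hcoe : ((sphereMap d e θ) : Euc d) = e (θ : Euc d) := rfl
  rw [hcoe, e.inner_map_map]

lemma exists_onb (hd : 0 < d) (u : Euc d) (hu : ‖u‖ = 1) :
    ∃ b : OrthonormalBasis (Fin d) ℝ (Euc d), b ⟨0, hd⟩ = u := by
  have horth : Orthonormal ℝ (Set.restrict {(⟨0, hd⟩ : Fin d)} (fun _ => u)) := by
    constructor
    · intro i
      simp [Set.restrict, hu]
    · intro i j hij
      exfalso; apply hij
      apply Subtype.ext
      have hi := i.2; have hj := j.2
      simp only [Set.mem_singleton_iff] at hi hj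
      rw [hi, hj]
  obtain ⟨b, hb⟩ := horth.exists_orthonormalBasis_extension_of_card_eq
    (by simp [finrank_euclideanSpace_fin])
  exact ⟨b, hb _ rfl⟩

lemma Qfun_unit_eq (hd : 0 < d) (u w : Euc d) (hu : ‖u‖ = 1) (hw : ‖w‖ = 1) :
    Qfun d u = Qfun d w := by
  obtain ⟨b, hb⟩ := exists_onb d hd u hu
  obtain ⟨b', hb'⟩ := exists_onb d hd w hw
  set e : Euc d ≃ₗᵢ[ℝ] Euc d := b.repr.trans b'.repr.symm with he
  have heu : e u = w := by
    rw [he]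
    simp only [LinearIsometryEquiv.trans_apply]
    rw [← hb, b.repr_self, b'.repr_symm_single]
    exact hb'
  rw [← heu, Qfun_isometry]

lemma Qfun_sum (hd : 0 < d) :
    ∑ i : Fin d, Qfun d (EuclideanSpace.single i (1:ℝ)) = 1 := by
  unfold Qfun
  rw [← lintegral_finset_sum _ (fun i _ => Qfun_meas_integrand d _)]
  have hpt : ∀ θ : sphere (0:Euc d) 1,
      ∑ i : Fin d, ENNReal.ofReal (⟪EuclideanSpace.single i (1:ℝ), (θ:Euc d)⟫ ^ 2) = 1 := by
    intro θ
    rw [← ENNReal.ofReal_sum_of_nonneg (fun i _ => sq_nonneg _)]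
    have hθ : ‖(θ:Euc d)‖ = 1 := mem_sphere_zero_iff_norm.1 θ.2
    have hsum : ∑ i : Fin d, ⟪EuclideanSpace.single i (1:ℝ), (θ:Euc d)⟫ ^ 2 = 1 := by
      have h1 : ∀ i, ⟪EuclideanSpace.single i (1:ℝ), (θ:Euc d)⟫ = (θ:Euc d) i := by
        intro i; rw [EuclideanSpace.inner_single_left]; simp
      simp_rw [h1]
      have hne := EuclideanSpace.norm_eq (θ:Euc d)
      rw [hθ] at hne
      have h2 : ∑ i, ‖(θ:Euc d) i‖^2 = 1 := by
        have h3 := congrArg (fun r : ℝ => r^2) hne.symm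
        simp only at h3
        rwa [Real.sq_sqrt (Finset.sum_nonneg fun i _ => sq_nonneg _), one_pow] at h3
      calc ∑ i, ((θ:Euc d) i)^2 = ∑ i, ‖(θ:Euc d) i‖^2 := by
            simp [Real.norm_eq_abs, sq_abs]
        _ = 1 := h2
    rw [hsum, ENNReal.ofReal_one]
  simp_rw [hpt]
  rw [lintegral_one, uniformSphere_univ d hd]

lemma lintegral_inner_sq (hd : 0 < d) (w : Euc d) :
    ∫⁻ θ : sphere (0 : Euc d) 1, ENNReal.ofReal (⟪w, (θ : Euc d)⟫ ^ 2) ∂(uniformSphere d)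
      = ENNReal.ofReal (‖w‖ ^ 2) * (d : ℝ≥0∞)⁻¹ := by
  have hq : Qfun d (EuclideanSpace.single (⟨0,hd⟩ : Fin d) (1:ℝ)) = (d : ℝ≥0∞)⁻¹ := by
    have hall : ∀ i : Fin d, Qfun d (EuclideanSpace.single i (1:ℝ))
        = Qfun d (EuclideanSpace.single (⟨0,hd⟩ : Fin d) (1:ℝ)) := fun i =>
      Qfun_unit_eq d hd (EuclideanSpace.single i (1:ℝ))
        (EuclideanSpace.single (⟨0,hd⟩ : Fin d) (1:ℝ))
        (by rw [EuclideanSpace.norm_single]; exact norm_one)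
        (by rw [EuclideanSpace.norm_single]; exact norm_one)
    have hsum := Qfun_sum d hd
    rw [Finset.sum_congr rfl (fun i _ => hall i), Finset.sum_const, Finset.card_univ,
      Fintype.card_fin, nsmul_eq_mul] at hsum
    rw [← one_div, ENNReal.eq_div_iff (by exact_mod_cast hd.ne') (ENNReal.natCast_ne_top d)]
    exact hsum
  rcases eq_or_ne w 0 with rfl | hw
  · simp
  · have hn0 : ‖w‖ ≠ 0 := norm_ne_zero_iff.2 hw
    have hnorm : ‖(‖w‖⁻¹ • w)‖ = 1 := norm_smul_inv_norm hw
    have hsplit : ∀ θ : sphere (0:Euc d) 1,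
        ENNReal.ofReal (⟪w, (θ:Euc d)⟫ ^ 2)
          = ENNReal.ofReal (‖w‖^2) * ENNReal.ofReal (⟪‖w‖⁻¹ • w, (θ:Euc d)⟫ ^ 2) := by
      intro θ
      rw [← ENNReal.ofReal_mul (sq_nonneg _)]
      congr 1
      rw [real_inner_smul_left, mul_pow]
      field_simp
    calc ∫⁻ θ, ENNReal.ofReal (⟪w, (θ:Euc d)⟫^2) ∂(uniformSphere d)
        = ∫⁻ θ, ENNReal.ofReal (‖w‖^2) * ENNReal.ofReal (⟪‖w‖⁻¹ • w, (θ:Euc d)⟫^2)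
            ∂(uniformSphere d) := lintegral_congr hsplit
      _ = ENNReal.ofReal (‖w‖^2) * Qfun d (‖w‖⁻¹ • w) := by
            rw [lintegral_const_mul _ (Qfun_meas_integrand d _)]; rfl
      _ = ENNReal.ofReal (‖w‖^2) * (d:ℝ≥0∞)⁻¹ := by
            rw [Qfun_unit_eq d hd (‖w‖⁻¹ • w)
              (EuclideanSpace.single (⟨0,hd⟩ : Fin d) (1:ℝ)) hnorm
              (by rw [EuclideanSpace.norm_single]; exact norm_one), hq]

end AuxQ

set_option maxHeartbeats 1000000 in
/-- for a curve of n equal point masses with continuously differentiable, distinct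
trajectories, the SW₂ metric derivative satisfies |μ'|_{SW}(t)² = (1/d)·(1/n) Σ |x_i'(t)|². -/
theorem SW2_metric_derivative_discrete (d n : ℕ) (hd : 0 < d) (hn : 0 < n)
    (I : Set ℝ) (hI : IsOpen I) (hIconn : I.OrdConnected)
    (x : Fin n → ℝ → Euc d) (v : Fin n → ℝ → Euc d)
    (hderiv : ∀ i, ∀ t ∈ I, HasDerivAt (x i) (v i t) t)
    (hcont : ∀ i, ContinuousOn (v i) I)
    (hdistinct : ∀ t ∈ I, ∀ i j : Fin n, i ≠ j → x i t ≠ x j t)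
    (μ : ℝ → Measure (Euc d))
    (hμ : ∀ t, μ t = ((n : ℝ≥0∞))⁻¹ • ∑ i : Fin n, Measure.dirac (x i t)) :
    ∀ t ∈ I,
      Tendsto (fun s => SW2r d (μ s) (μ t) / |s - t|) (𝓝[I \ {t}] t)
        (𝓝 (Real.sqrt ((1 / (d * n) : ℝ) * ∑ i : Fin n, ‖v i t‖ ^ 2))) := by
  classical
  intro t ht
  haveI hprob : IsProbabilityMeasure (uniformSphere d) := ⟨uniformSphere_univ d hd⟩
  set σm := uniformSphere d with hσm
  set l : Filter ℝ := 𝓝[I \ {t}] t with hldef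
  haveI hlcg : l.IsCountablyGenerated := by rw [hldef]; infer_instance
  have hln : l ≤ 𝓝[≠] t := nhdsWithin_mono _ (fun s hs => hs.2)
  have hev_ne : ∀ᶠ s in l, s ≠ t := by
    have h := eventually_mem_nhdsWithin (a := t) (s := I \ {t})
    exact h.mono fun s hs => hs.2
  set sl : Fin n → ℝ → Euc d := fun i s => (s - t)⁻¹ • (x i s - x i t) with hsl
  have hslope : ∀ i, Tendsto (sl i) l (𝓝 (v i t)) := by
    intro i
    have h := hasDerivAt_iff_tendsto_slope.1 (hderiv i t ht)
    exact (h.mono_left hln).congr fun s => rfl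
  have hxc : ∀ i, Tendsto (fun s => x i s) l (𝓝 (x i t)) := fun i =>
    ((hderiv i t ht).continuousAt.tendsto).mono_left (hln.trans nhdsWithin_le_nhds)
  have hinner_meas : ∀ θ : sphere (0:Euc d) 1, Measurable fun y : Euc d => ⟪y, (θ:Euc d)⟫ :=
    fun θ => (continuous_id.inner continuous_const).measurable
  have hproj : ∀ (s : ℝ) (θ : sphere (0:Euc d) 1),
      projMeas d (μ s) θ = (n : ℝ≥0∞)⁻¹ • ∑ i : Fin n, Measure.dirac ⟪x i s, (θ:Euc d)⟫ := by
    intro s θ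
    unfold projMeas
    rw [hμ s]
    exact map_discrete (hinner_meas θ) _ _
  have hWle : ∀ s θ, W2sq (projMeas d (μ s) θ) (projMeas d (μ t) θ)
      ≤ (n:ℝ≥0∞)⁻¹ * ∑ i : Fin n, ENNReal.ofReal (⟪x i s - x i t, (θ:Euc d)⟫^2) := by
    intro s θ
    rw [hproj s θ, hproj t θ]
    refine le_trans (W2sq_discrete_le _ _) (le_of_eq ?_)
    congr 1
    refine Finset.sum_congr rfl fun i _ => ?_
    rw [inner_sub_left]
  set good : ℝ → Set (sphere (0:Euc d) 1) := fun s =>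
    {θ | ∀ i j k : Fin n, j ≠ k →
      2 * |⟪x i s - x i t, (θ:Euc d)⟫| ≤ |⟪x j t - x k t, (θ:Euc d)⟫|} with hgood
  have hgood_meas : ∀ s, MeasurableSet (good s) := by
    intro s
    have heq : good s = ⋂ (i : Fin n) (j : Fin n) (k : Fin n),
        {θ : sphere (0:Euc d) 1 | j ≠ k →
          2 * |⟪x i s - x i t, (θ:Euc d)⟫| ≤ |⟪x j t - x k t, (θ:Euc d)⟫|} := by
      ext θ; simp only [hgood, Set.mem_setOf_eq, Set.mem_iInter]
    rw [heq]
    refine MeasurableSet.iInter fun i => MeasurableSet.iInter fun j =>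
      MeasurableSet.iInter fun k => ?_
    by_cases hjk : j = k
    · simp [hjk]
    · have heq2 : {θ : sphere (0:Euc d) 1 | j ≠ k →
          2 * |⟪x i s - x i t, (θ:Euc d)⟫| ≤ |⟪x j t - x k t, (θ:Euc d)⟫|}
          = {θ : sphere (0:Euc d) 1 |
            2 * |⟪x i s - x i t, (θ:Euc d)⟫| ≤ |⟪x j t - x k t, (θ:Euc d)⟫|} := by
        ext θ; simp [hjk]
      rw [heq2]
      exact (isClosed_le
        (continuous_const.mul (continuous_const.inner continuous_subtype_val).abs)
        (continuous_const.inner continuous_subtype_val).abs).measurableSet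
  have hWge : ∀ s, ∀ θ ∈ good s,
      (n:ℝ≥0∞)⁻¹ * ∑ i : Fin n, ENNReal.ofReal (⟪x i s - x i t, (θ:Euc d)⟫^2)
        ≤ W2sq (projMeas d (μ s) θ) (projMeas d (μ t) θ) := by
    intro s θ hθ
    rw [hproj s θ, hproj t θ]
    have hC : ∀ i j k : Fin n, j ≠ k →
        2 * |⟪x i s,(θ:Euc d)⟫ - ⟪x i t,(θ:Euc d)⟫| ≤ |⟪x j t,(θ:Euc d)⟫ - ⟪x k t,(θ:Euc d)⟫| := by
      intro i j k hjk
      have h := hθ i j k hjk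
      rwa [inner_sub_left, inner_sub_left] at h
    refine le_trans (le_of_eq ?_)
      (W2sq_discrete_ge (fun i => ⟪x i s,(θ:Euc d)⟫) (fun i => ⟪x i t,(θ:Euc d)⟫) hC)
    congr 1
    refine Finset.sum_congr rfl fun i _ => ?_
    rw [inner_sub_left]
  have hmeas_i : ∀ (s : ℝ) (i : Fin n), Measurable fun θ : sphere (0:Euc d) 1 =>
      ENNReal.ofReal (⟪x i s - x i t, (θ:Euc d)⟫^2) := fun s i => Qfun_meas_integrand d _
  have hUB : ∀ s, SW2sq d (μ s) (μ t)
      ≤ (n:ℝ≥0∞)⁻¹ * ∑ i : Fin n, (ENNReal.ofReal (‖x i s - x i t‖^2) * (d:ℝ≥0∞)⁻¹) := by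
    intro s
    have hrfl : SW2sq d (μ s) (μ t)
        = ∫⁻ θ, W2sq (projMeas d (μ s) θ) (projMeas d (μ t) θ) ∂σm := rfl
    rw [hrfl]
    refine le_trans (lintegral_mono (fun θ => hWle s θ)) ?_
    rw [lintegral_const_mul _ (Finset.measurable_sum _ (fun i _ => hmeas_i s i)),
      lintegral_finset_sum _ (fun i _ => hmeas_i s i)]
    refine mul_le_mul_right (le_of_eq (Finset.sum_congr rfl fun i _ => ?_)) _
    rw [hσm]
    exact lintegral_inner_sq d hd _
  have hterm_ne : ∀ (s : ℝ) (i : Fin n),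
      ENNReal.ofReal (‖x i s - x i t‖^2) * (d:ℝ≥0∞)⁻¹ ≠ ⊤ := fun s i =>
    ENNReal.mul_ne_top ENNReal.ofReal_ne_top
      (ENNReal.inv_ne_top.2 (by exact_mod_cast hd.ne'))
  have hRHS_ne : ∀ s : ℝ,
      (n:ℝ≥0∞)⁻¹ * ∑ i : Fin n, (ENNReal.ofReal (‖x i s - x i t‖^2) * (d:ℝ≥0∞)⁻¹) ≠ ⊤ := by
    intro s
    refine ENNReal.mul_ne_top (ENNReal.inv_ne_top.2 (by exact_mod_cast hn.ne')) ?_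
    exact (ENNReal.sum_lt_top.2 fun i _ => (hterm_ne s i).lt_top).ne
  have hfin : ∀ s, SW2sq d (μ s) (μ t) ≠ ⊤ := fun s => ne_top_of_le_ne_top (hRHS_ne s) (hUB s)
  set gR : ℝ → sphere (0:Euc d) 1 → ℝ := fun s θ =>
    Set.indicator (good s) (fun θ => (n:ℝ)⁻¹ * ∑ i : Fin n, ⟪x i s - x i t, (θ:Euc d)⟫^2) θ
    with hgR
  have hgR_nonneg : ∀ s θ, 0 ≤ gR s θ := by
    intro s θ
    refine Set.indicator_nonneg (fun θ' _ => ?_) θ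
    exact mul_nonneg (inv_nonneg.2 (Nat.cast_nonneg n)) (Finset.sum_nonneg fun i _ => sq_nonneg _)
  have hcontval : ∀ s : ℝ, Continuous (fun θ : sphere (0:Euc d) 1 =>
      (n:ℝ)⁻¹ * ∑ i : Fin n, ⟪x i s - x i t, (θ:Euc d)⟫^2) := fun s =>
    continuous_const.mul (continuous_finset_sum _ fun i _ =>
      (continuous_const.inner continuous_subtype_val).pow 2)
  have hgR_meas : ∀ s, AEStronglyMeasurable (gR s) σm := fun s =>
    ((hcontval s).stronglyMeasurable.indicator (hgood_meas s)).aestronglyMeasurable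
  have key0 : ∀ s, ∫ θ, gR s θ ∂σm ≤ (SW2sq d (μ s) (μ t)).toReal := by
    intro s
    rw [integral_eq_lintegral_of_nonneg_ae (Filter.Eventually.of_forall (hgR_nonneg s))
      (hgR_meas s)]
    refine ENNReal.toReal_mono (hfin s) ?_
    have hpt : ∀ θ, ENNReal.ofReal (gR s θ)
        ≤ W2sq (projMeas d (μ s) θ) (projMeas d (μ t) θ) := by
      intro θ
      by_cases hθ : θ ∈ good s
      · simp only [hgR, Set.indicator_of_mem hθ]
        refine le_trans (le_of_eq ?_) (hWge s θ hθ)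
        rw [ENNReal.ofReal_mul (inv_nonneg.2 (Nat.cast_nonneg n)),
          ENNReal.ofReal_sum_of_nonneg (fun i _ => sq_nonneg _),
          ENNReal.ofReal_inv_of_pos (by exact_mod_cast hn), ENNReal.ofReal_natCast]
      · simp only [hgR, Set.indicator_of_notMem hθ, ENNReal.ofReal_zero]
        exact zero_le
    exact lintegral_mono hpt
  set g2 : ℝ → sphere (0:Euc d) 1 → ℝ := fun s θ =>
    Set.indicator (good s) (fun θ => (n:ℝ)⁻¹ * ∑ i : Fin n, ⟪sl i s, (θ:Euc d)⟫^2) θ with hg2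
  have hg2_eq : ∀ s, s ≠ t → ∀ θ, g2 s θ = gR s θ / (s-t)^2 := by
    intro s hs θ
    have hsub : (s - t) ≠ 0 := sub_ne_zero.2 hs
    by_cases hθ : θ ∈ good s
    · simp only [hg2, hgR, Set.indicator_of_mem hθ, hsl]
      simp only [real_inner_smul_left, mul_pow]
      rw [← Finset.mul_sum]
      field_simp
    · simp only [hg2, hgR, Set.indicator_of_notMem hθ, zero_div]
  have hbound_s : ∀ᶠ s in l, ∀ i : Fin n, ‖sl i s‖ ≤ ‖v i t‖ + 1 := by
    rw [eventually_all]
    intro i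
    exact ((hslope i).norm).eventually (eventually_le_nhds (lt_add_one _))
  set limf : sphere (0:Euc d) 1 → ℝ := fun θ =>
    (n:ℝ)⁻¹ * ∑ i : Fin n, ⟪v i t, (θ:Euc d)⟫^2 with hlimf
  have hlim_int : Tendsto (fun s => ∫ θ, g2 s θ ∂σm) l (𝓝 (∫ θ, limf θ ∂σm)) := by
    refine tendsto_integral_filter_of_dominated_convergence
      (fun _ => (n:ℝ)⁻¹ * ∑ i : Fin n, (‖v i t‖+1)^2) ?_ ?_ ?_ ?_
    · refine Filter.Eventually.of_forall fun s => ?_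
      exact ((continuous_const.mul (continuous_finset_sum _ fun i _ =>
        (continuous_const.inner continuous_subtype_val).pow 2)).stronglyMeasurable.indicator
        (hgood_meas s)).aestronglyMeasurable
    · filter_upwards [hbound_s] with s hs
      refine Filter.Eventually.of_forall fun θ => ?_
      have hθ1 : ‖(θ:Euc d)‖ = 1 := mem_sphere_zero_iff_norm.1 θ.2
      have hval : (n:ℝ)⁻¹ * ∑ i : Fin n, ⟪sl i s, (θ:Euc d)⟫^2
          ≤ (n:ℝ)⁻¹ * ∑ i : Fin n, (‖v i t‖+1)^2 := by
        refine mul_le_mul_of_nonneg_left (Finset.sum_le_sum fun i _ => ?_) (inv_nonneg.2 (Nat.cast_nonneg n))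
        have h1 : |⟪sl i s, (θ:Euc d)⟫| ≤ ‖sl i s‖ := by
          have h2 := abs_real_inner_le_norm (sl i s) (θ:Euc d)
          rwa [hθ1, mul_one] at h2
        calc ⟪sl i s, (θ:Euc d)⟫^2 = |⟪sl i s, (θ:Euc d)⟫|^2 := (sq_abs _).symm
          _ ≤ (‖v i t‖+1)^2 := by
              exact pow_le_pow_left₀ (abs_nonneg _) (le_trans h1 (hs i)) 2
      have hval0 : (0:ℝ) ≤ (n:ℝ)⁻¹ * ∑ i : Fin n, ⟪sl i s, (θ:Euc d)⟫^2 :=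
        mul_nonneg (inv_nonneg.2 (Nat.cast_nonneg n)) (Finset.sum_nonneg fun i _ => sq_nonneg _)
      have hbnd0 : (0:ℝ) ≤ (n:ℝ)⁻¹ * ∑ i : Fin n, (‖v i t‖+1)^2 :=
        mul_nonneg (inv_nonneg.2 (Nat.cast_nonneg n)) (Finset.sum_nonneg fun i _ => sq_nonneg _)
      by_cases hθ : θ ∈ good s
      · simp only [hg2, Set.indicator_of_mem hθ]
        rw [Real.norm_eq_abs, abs_of_nonneg hval0]
        exact hval
      · simp only [hg2, Set.indicator_of_notMem hθ]
        rw [norm_zero]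
        exact hbnd0
    · exact integrable_const _
    · have hae : ∀ᵐ (θ : sphere (0:Euc d) 1) ∂σm, ∀ j k : Fin n, j ≠ k → ⟪x j t - x k t, (θ:Euc d)⟫ ≠ 0 := by
        rw [ae_all_iff]
        intro j
        rw [ae_all_iff]
        intro k
        by_cases hjk : j = k
        · exact Filter.Eventually.of_forall fun θ h => absurd hjk h
        · have hnull := uniformSphere_hyperplane_null d hd
            (sub_ne_zero.2 (hdistinct t ht j k hjk))
          rw [hσm, MeasureTheory.ae_iff]
          refine measure_mono_null ?_ hnull
          intro θ hθ
          simp only [Set.mem_setOf_eq] at hθ ⊢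
          push_neg at hθ
          exact hθ.2
      filter_upwards [hae] with θ hθ
      have hevmem : ∀ᶠ s in l, θ ∈ good s := by
        have hper : ∀ i j k : Fin n, ∀ᶠ s in l, j ≠ k →
            2 * |⟪x i s - x i t, (θ:Euc d)⟫| ≤ |⟪x j t - x k t, (θ:Euc d)⟫| := by
          intro i j k
          by_cases hjk : j = k
          · exact Filter.Eventually.of_forall fun s h => absurd hjk h
          · have hc : (0:ℝ) < |⟪x j t - x k t, (θ:Euc d)⟫| := abs_pos.2 (hθ j k hjk)
            have hx0 : Tendsto (fun s => 2 * |⟪x i s - x i t, (θ:Euc d)⟫|) l (𝓝 0) := by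
              have h1 : Tendsto (fun s => x i s - x i t) l (𝓝 0) := by
                have h2 := (hxc i).sub (tendsto_const_nhds (x := x i t))
                rwa [sub_self] at h2
              have h2 : Tendsto (fun s => ⟪x i s - x i t, (θ:Euc d)⟫) l (𝓝 0) := by
                have h3 : Tendsto (fun s => ⟪x i s - x i t, (θ:Euc d)⟫) l
                    (𝓝 (⟪(0:Euc d), (θ:Euc d)⟫)) :=
                  h1.inner (tendsto_const_nhds (x := (θ:Euc d)))
                rwa [inner_zero_left] at h3
              have h3 := h2.abs
              rw [abs_zero] at h3
              have h4 := h3.const_mul 2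
              rwa [mul_zero] at h4
            exact (hx0.eventually (eventually_le_nhds hc)).mono fun s h _ => h
        have hall := eventually_all.2 fun i : Fin n =>
          eventually_all.2 fun j : Fin n => eventually_all.2 fun k : Fin n => hper i j k
        exact hall.mono fun s hs => hs
      have hmain : Tendsto (fun s => (n:ℝ)⁻¹ * ∑ i : Fin n, ⟪sl i s, (θ:Euc d)⟫^2) l
          (𝓝 (limf θ)) := by
        refine Tendsto.const_mul _ (tendsto_finset_sum _ fun i _ => ?_)
        exact ((hslope i).inner (tendsto_const_nhds (x := (θ:Euc d)))).pow 2
      refine Filter.Tendsto.congr' ?_ hmain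
      filter_upwards [hevmem] with s hs
      simp only [hg2, Set.indicator_of_mem hs]
  have hd' : (d:ℝ) ≠ 0 := Nat.cast_ne_zero.2 hd.ne'
  have hn' : (n:ℝ) ≠ 0 := Nat.cast_ne_zero.2 hn.ne'
  have hint_w : ∀ wv : Euc d, ∫ θ, ⟪wv, (θ:Euc d)⟫^2 ∂σm = ‖wv‖^2 / d := by
    intro wv
    rw [integral_eq_lintegral_of_nonneg_ae (Filter.Eventually.of_forall fun θ => sq_nonneg _)
      (((continuous_const.inner continuous_subtype_val).pow 2).aestronglyMeasurable),
      hσm, lintegral_inner_sq d hd wv, ENNReal.toReal_mul,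
      ENNReal.toReal_ofReal (sq_nonneg _), ENNReal.toReal_inv, ENNReal.toReal_natCast,
      div_eq_mul_inv]
  have hintegrable_i : ∀ i : Fin n,
      Integrable (fun θ : sphere (0:Euc d) 1 => ⟪v i t, (θ:Euc d)⟫^2) σm := by
    intro i
    refine Integrable.mono' (integrable_const (‖v i t‖^2))
      (((continuous_const.inner continuous_subtype_val).pow 2).aestronglyMeasurable) ?_
    refine Filter.Eventually.of_forall fun θ => ?_
    have hθ1 : ‖(θ:Euc d)‖ = 1 := mem_sphere_zero_iff_norm.1 θ.2
    rw [Real.norm_eq_abs, abs_of_nonneg (sq_nonneg _)]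
    have h1 : |⟪v i t, (θ:Euc d)⟫| ≤ ‖v i t‖ := by
      have h2 := abs_real_inner_le_norm (v i t) (θ:Euc d)
      rwa [hθ1, mul_one] at h2
    calc ⟪v i t,(θ:Euc d)⟫^2 = |⟪v i t,(θ:Euc d)⟫|^2 := (sq_abs _).symm
      _ ≤ ‖v i t‖^2 := pow_le_pow_left₀ (abs_nonneg _) h1 2
  set L : ℝ := (1 / (d * n) : ℝ) * ∑ i : Fin n, ‖v i t‖ ^ 2 with hLdef
  have hlim_val : ∫ θ, limf θ ∂σm = L := by
    simp only [hlimf]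
    rw [integral_const_mul, integral_finset_sum _ (fun i _ => hintegrable_i i)]
    have hsum : ∑ i : Fin n, ∫ θ, ⟪v i t,(θ:Euc d)⟫^2 ∂σm = ∑ i : Fin n, ‖v i t‖^2 / d :=
      Finset.sum_congr rfl fun i _ => hint_w _
    rw [hsum, ← Finset.sum_div, hLdef]
    ring
  have hFr_le : ∀ s, (SW2sq d (μ s) (μ t)).toReal
      ≤ (n:ℝ)⁻¹ * ∑ i : Fin n, (‖x i s - x i t‖^2 * (d:ℝ)⁻¹) := by
    intro s
    have h := ENNReal.toReal_mono (hRHS_ne s) (hUB s)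
    refine le_trans h (le_of_eq ?_)
    rw [ENNReal.toReal_mul, ENNReal.toReal_inv, ENNReal.toReal_natCast]
    congr 1
    rw [ENNReal.toReal_sum (fun i _ => hterm_ne s i)]
    refine Finset.sum_congr rfl fun i _ => ?_
    rw [ENNReal.toReal_mul, ENNReal.toReal_ofReal (sq_nonneg _), ENNReal.toReal_inv,
      ENNReal.toReal_natCast]
  set U2 : ℝ → ℝ := fun s => (n:ℝ)⁻¹ * ∑ i : Fin n, (‖sl i s‖^2 * (d:ℝ)⁻¹) with hU2
  have hU2_tend : Tendsto U2 l (𝓝 L) := by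
    have ht1 : Tendsto (fun s => (n:ℝ)⁻¹ * ∑ i : Fin n, (‖sl i s‖^2 * (d:ℝ)⁻¹)) l
        (𝓝 ((n:ℝ)⁻¹ * ∑ i : Fin n, (‖v i t‖^2 * (d:ℝ)⁻¹))) := by
      refine Tendsto.const_mul _ (tendsto_finset_sum _ fun i _ => ?_)
      exact (((hslope i).norm).pow 2).mul_const _
    have hLeq : (n:ℝ)⁻¹ * ∑ i : Fin n, (‖v i t‖^2 * (d:ℝ)⁻¹) = L := by
      rw [hLdef, ← Finset.sum_mul]
      ring
    rw [hU2]
    rwa [hLeq] at ht1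
  have hup_ev : ∀ᶠ s in l, (SW2sq d (μ s) (μ t)).toReal / (s-t)^2 ≤ U2 s := by
    filter_upwards [hev_ne] with s hs
    have hsub : s - t ≠ 0 := sub_ne_zero.2 hs
    have hpos : (0:ℝ) < (s-t)^2 := lt_of_le_of_ne (sq_nonneg _) (Ne.symm (pow_ne_zero 2 hsub))
    have h1 : (SW2sq d (μ s) (μ t)).toReal / (s-t)^2
        ≤ ((n:ℝ)⁻¹ * ∑ i : Fin n, (‖x i s - x i t‖^2 * (d:ℝ)⁻¹)) / (s-t)^2 := by
      gcongr
      exact hFr_le s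
    refine le_trans h1 (le_of_eq ?_)
    have hni : ∀ i : Fin n, ‖sl i s‖^2 = ‖x i s - x i t‖^2 / (s-t)^2 := by
      intro i
      simp only [hsl]
      rw [norm_smul, mul_pow, norm_inv, Real.norm_eq_abs, inv_pow, sq_abs]
      rw [div_eq_mul_inv, mul_comm]
    simp only [hU2]
    simp_rw [hni]
    rw [mul_div_assoc]
    congr 1
    rw [Finset.sum_div]
    exact Finset.sum_congr rfl fun i _ => by ring
  have hlow_ev : ∀ᶠ s in l, ∫ θ, g2 s θ ∂σm ≤ (SW2sq d (μ s) (μ t)).toReal / (s-t)^2 := by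
    filter_upwards [hev_ne] with s hs
    have hsub : s - t ≠ 0 := sub_ne_zero.2 hs
    have hpos : (0:ℝ) < (s-t)^2 := lt_of_le_of_ne (sq_nonneg _) (Ne.symm (pow_ne_zero 2 hsub))
    have heq : ∫ θ, g2 s θ ∂σm = (∫ θ, gR s θ ∂σm) / (s-t)^2 := by
      rw [← integral_div]
      exact integral_congr_ae (Filter.Eventually.of_forall fun θ => hg2_eq s hs θ)
    rw [heq]
    gcongr
    exact key0 s
  have hmid : Tendsto (fun s => (SW2sq d (μ s) (μ t)).toReal / (s-t)^2) l (𝓝 L) := by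
    have hg2t : Tendsto (fun s => ∫ θ, g2 s θ ∂σm) l (𝓝 L) := by
      rw [← hlim_val]; exact hlim_int
    exact tendsto_of_tendsto_of_tendsto_of_le_of_le' hg2t hU2_tend hlow_ev hup_ev
  have hsqrt : Tendsto (fun s => Real.sqrt ((SW2sq d (μ s) (μ t)).toReal / (s-t)^2)) l
      (𝓝 (Real.sqrt L)) := (Real.continuous_sqrt.tendsto L).comp hmid
  refine Filter.Tendsto.congr' ?_ hsqrt
  filter_upwards [hev_ne] with s hs
  have h1 : SW2r d (μ s) (μ t) = Real.sqrt ((SW2sq d (μ s) (μ t)).toReal) := by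
    unfold SW2r SW2
    rw [← ENNReal.toReal_rpow, ← Real.sqrt_eq_rpow]
  rw [Real.sqrt_div ENNReal.toReal_nonneg, Real.sqrt_sq_eq_abs, h1]
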